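/- For k ≥ 1 and m ≥ 1, the language L_m = {a^{5mk(1+nm)} | n ≥ 0} over the single letter a is generated by the k-limited propagating D0L system with axiom a^{5mk} and rule a → a a^{5m²}: a k-limited step applied to a^N with N ≥ k adds exactly 5m²k letters, so the word derived in n steps from the axiom is a^{5mk + 5m²kn} = a^{5mk(1+nm)}. -/
import Mathlib


/-- One k-limited derivation step: for each letter x, exactly min(k, |v|_x) occurrences
of x in v are rewritten, each by some rule of R with left side x; the remaining
occurrences stay unchanged. -/
def klStep {V : Type*} [DecidableEq V] (k : ℕ) (R : Set (V × List V)) (v w : List V) : Prop :=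
  ∃ (S : Finset (Fin v.length)) (f : Fin v.length → List V),
    (∀ x : V, (S.filter (fun i => v.get i = x)).card = min k (v.count x)) ∧
    (∀ i ∈ S, (v.get i, f i) ∈ R) ∧
    (∀ i, i ∉ S → f i = [v.get i]) ∧
    w = (List.ofFn f).flatten

/-- Deterministic k-limited step with rule function P. -/
def detStep {V : Type*} [DecidableEq V] (k : ℕ) (P : V → List V) : List V → List V → Prop :=
  klStep k {p | p.2 = P p.1}

/-- The language generated from axiom ω by a step relation. -/
def lang {V : Type*} (step : List V → List V → Prop) (ω : List V) : Set (List V) :=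
  {w | Relation.ReflTransGen step ω w}

lemma unit_eq_replicate (l : List Unit) : l = List.replicate l.length () := by
  induction l with
  | nil => rfl
  | cons a t ih => simp [List.replicate_succ]; exact ih

lemma card_filter_lt_fin (n k : ℕ) (h : k ≤ n) :
    (Finset.univ.filter fun i : Fin n => ↑i < k).card = k := by
  rw [Finset.card_filter, Fin.sum_univ_eq_sum_range (fun i => if i < k then 1 else 0),
    ← Finset.card_filter]
  have : (Finset.range n).filter (· < k) = Finset.range k := by
    ext x; simp; omega
  rw [this, Finset.card_range]

lemma flatten_len (n : ℕ) (S : Finset (Fin n)) (f : Fin n → List Unit) (c : ℕ)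
    (h1 : ∀ i ∈ S, (f i).length = c) (h2 : ∀ i ∉ S, (f i).length = 1) :
    ((List.ofFn f).flatten).length = n - S.card + S.card * c := by
  rw [List.length_flatten, List.map_ofFn, List.sum_ofFn]
  have key : ∀ i : Fin n, (Function.comp List.length f) i = if i ∈ S then c else 1 := by
    intro i; by_cases hi : i ∈ S <;> simp [Function.comp, hi, h1, h2]
  rw [Finset.sum_congr rfl (fun i _ => key i), Finset.sum_ite]
  have e1 : Finset.univ.filter (fun i : Fin n => i ∈ S) = S := by ext; simp
  have e2 := Finset.card_filter_add_card_filter_not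
    (s := (Finset.univ : Finset (Fin n))) (p := fun i => i ∈ S)
  rw [e1] at e2
  rw [e1, Finset.sum_const, Finset.sum_const, smul_eq_mul, smul_eq_mul, mul_one]
  have hcu : (Finset.univ : Finset (Fin n)).card = n := by simp
  omega

lemma step_out (k M N : ℕ) (hk : k ≤ N) (w : List Unit)
    (h : detStep k (fun _ : Unit => List.replicate (1 + M) ()) (List.replicate N ()) w) :
    w = List.replicate (N + M * k) () := by
  obtain ⟨S, f, hcard, hmem, hout, hw⟩ := h
  have hSc : S.card = k := by
    have h0 := hcard ()
    rw [Finset.filter_true_of_mem (fun i _ => Subsingleton.elim _ _)] at h0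
    simpa [List.count_replicate, Nat.min_eq_left hk] using h0
  have hflat : w.length = (List.replicate N ()).length - S.card + S.card * (1 + M) := by
    rw [hw]
    apply flatten_len
    · intro i hi
      have := hmem i hi
      simp only [Set.mem_setOf_eq] at this
      rw [this]; simp
    · intro i hi; rw [hout i hi]; simp
  rw [unit_eq_replicate w, hflat]
  congr 1
  simp only [List.length_replicate, hSc]
  have : k * (1 + M) = k + k * M := by ring
  have : M * k = k * M := by ring
  omega

lemma step_in (k M N : ℕ) (hk : k ≤ N) :
    detStep k (fun _ : Unit => List.replicate (1 + M) ()) (List.replicate N ())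
      (List.replicate (N + M * k) ()) := by
  have hlk : k ≤ (List.replicate N ()).length := by simpa using hk
  refine ⟨Finset.univ.filter (fun i => ↑i < k),
    fun i => if (i : ℕ) < k then List.replicate (1 + M) () else [()], ?_, ?_, ?_, ?_⟩
  · intro x
    rw [Finset.filter_true_of_mem (fun i _ => Subsingleton.elim _ _),
      card_filter_lt_fin _ k hlk]
    have : x = () := rfl
    subst this
    simp [List.count_replicate, Nat.min_eq_left hk]
  · intro i hi
    simp only [Finset.mem_filter] at hi
    simp [hi.2]
  · intro i hi
    simp only [Finset.mem_filter, Finset.mem_univ, true_and, not_lt] at hi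
    simp [Nat.not_lt.mpr hi]
  · rw [unit_eq_replicate (List.ofFn _).flatten]
    congr 1
    have ha : ∀ i ∈ Finset.univ.filter (fun i : Fin (List.replicate N ()).length => ↑i < k),
        ((fun i : Fin (List.replicate N ()).length =>
          if (i : ℕ) < k then List.replicate (1 + M) () else [()]) i).length = 1 + M := by
      intro i hi
      simp only [Finset.mem_filter] at hi
      simp only [if_pos hi.2, List.length_replicate]
    have hb : ∀ i ∉ Finset.univ.filter (fun i : Fin (List.replicate N ()).length => ↑i < k),
        ((fun i : Fin (List.replicate N ()).length =>
          if (i : ℕ) < k then List.replicate (1 + M) () else [()]) i).length = 1 := by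
      intro i hi
      simp only [Finset.mem_filter, Finset.mem_univ, true_and, not_lt] at hi
      simp only [if_neg (Nat.not_lt.mpr hi), List.length_cons, List.length_nil]
    rw [flatten_len _ _ _ (1 + M) ha hb]
    rw [card_filter_lt_fin _ k hlk]
    simp only [List.length_replicate]
    have : k * (1 + M) = k + k * M := by ring
    have : M * k = k * M := by ring
    omega

/-- Over the one-letter alphabet, the kℓPD0L system with axiom a^{5mk} and rule
a → a a^{5m²} generates exactly L_m = {a^{5mk(1+nm)} | n ≥ 0}. -/
theorem stmt12 (k m : ℕ) (hk : 1 ≤ k) (hm : 1 ≤ m) :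
    lang (detStep k (fun _ : Unit => List.replicate (1 + 5 * m ^ 2) ()))
        (List.replicate (5 * m * k) ()) =
      {w | ∃ n : ℕ, w = List.replicate (5 * m * k * (1 + n * m)) ()} := by
  have hbig : ∀ n : ℕ, k ≤ 5 * m * k * (1 + n * m) := by
    intro n
    calc k ≤ 5 * m * k := by nlinarith
    _ ≤ 5 * m * k * (1 + n * m) := Nat.le_mul_of_pos_right _ (by positivity)
  have hstepN : ∀ n : ℕ, 5 * m * k * (1 + n * m) + 5 * m ^ 2 * k
      = 5 * m * k * (1 + (n + 1) * m) := by intro n; ring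
  ext w
  constructor
  · intro hw
    induction hw with
    | refl => exact ⟨0, by norm_num⟩
    | tail _ hstep ih =>
      obtain ⟨n, rfl⟩ := ih
      have := step_out k (5 * m ^ 2) _ (hbig n) _ hstep
      exact ⟨n + 1, by rw [this, hstepN n]⟩
  · rintro ⟨n, rfl⟩
    induction n with
    | zero =>
      have : 5 * m * k * (1 + 0 * m) = 5 * m * k := by ring
      rw [this]
      exact Relation.ReflTransGen.refl
    | succ n ih =>
      refine Relation.ReflTransGen.tail ih ?_
      have := step_in k (5 * m ^ 2) _ (hbig n)
      rwa [hstepN n] at this
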